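/- Let f, g ∈ ℂ[x₁,…,xₙ] be polynomials whose highest homogeneous parts f̄ and ḡ (the homogeneous components of f and g of degrees deg f and deg g, respectively) are algebraically independent over ℂ. Then for every polynomial G(x, y) ∈ ℂ[x, y], the total degree of G(f, g) satisfies deg G(f, g) ≥ (deg_y G(x, y)) · deg g, where deg_y denotes the degree of G in the variable y. -/

import Mathlib

open MvPolynomial

lemma degree_add' {σ : Type*} (a b : σ →₀ ℕ) :
    Finsupp.degree (a + b) = Finsupp.degree a + Finsupp.degree b := by
  simp [Finsupp.degree_eq_weight_one, map_add]

lemma coeff_zero_of_lt {σ : Type*} (p : MvPolynomial σ ℂ) (u : σ →₀ ℕ)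
    (h : p.totalDegree < u.degree) : coeff u p = 0 := by
  apply coeff_eq_zero_of_totalDegree_lt
  exact h

lemma hc_mul {σ : Type*} (p q : MvPolynomial σ ℂ) (a b : ℕ)
    (hp : p.totalDegree ≤ a) (hq : q.totalDegree ≤ b) :
    homogeneousComponent (a + b) (p * q) =
      homogeneousComponent a p * homogeneousComponent b q := by
  classical
  ext u
  rw [coeff_homogeneousComponent, coeff_mul, coeff_mul]
  by_cases hu : u.degree = a + b
  · rw [if_pos hu]
    apply Finset.sum_congr rfl
    rintro ⟨v, w⟩ hvw
    rw [Finset.HasAntidiagonal.mem_antidiagonal] at hvw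
    have hdeg : v.degree + w.degree = a + b := by
      rw [← degree_add', hvw, hu]
    rw [coeff_homogeneousComponent, coeff_homogeneousComponent]
    by_cases hv : v.degree = a
    · have hw : w.degree = b := by omega
      rw [if_pos hv, if_pos hw]
    · rw [if_neg hv]
      rcases lt_or_gt_of_ne hv with h1 | h1
      · have : q.totalDegree < w.degree := by omega
        rw [coeff_zero_of_lt q w this]
        simp
      · have : p.totalDegree < v.degree := by omega
        rw [coeff_zero_of_lt p v this]
        simp
  · rw [if_neg hu]
    symm
    apply Finset.sum_eq_zero
    rintro ⟨v, w⟩ hvw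
    rw [Finset.HasAntidiagonal.mem_antidiagonal] at hvw
    rw [coeff_homogeneousComponent, coeff_homogeneousComponent]
    by_cases hv : v.degree = a
    · by_cases hw : w.degree = b
      · exfalso
        apply hu
        rw [← hvw, degree_add', hv, hw]
      · rw [if_neg hw]; simp
    · rw [if_neg hv]; simp

lemma hc_pow {σ : Type*} (p : MvPolynomial σ ℂ) (a k : ℕ) (hp : p.totalDegree ≤ a) :
    homogeneousComponent (k * a) (p ^ k) = (homogeneousComponent a p) ^ k := by
  induction k with
  | zero =>
      simp only [Nat.zero_mul, pow_zero]
      rw [homogeneousComponent_zero]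
      simp
  | succ k ih =>
      have h1 : (k + 1) * a = k * a + a := by ring
      rw [h1, pow_succ, pow_succ, ← ih,
        hc_mul (p ^ k) p (k * a) a (le_trans (totalDegree_pow _ _)
          (Nat.mul_le_mul_left k hp)) hp]

lemma aeval_monomial_two {n : ℕ} (p q : MvPolynomial (Fin n) ℂ) (s : Fin 2 →₀ ℕ) (c : ℂ) :
    aeval ![p, q] (monomial s c) = C c * (p ^ (s 0) * q ^ (s 1)) := by
  rw [aeval_monomial]
  congr 1
  rw [Finsupp.prod_fintype _ _ (fun i => pow_zero _), Fin.prod_univ_two]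
  simp

theorem no_name (n : ℕ) (f g : MvPolynomial (Fin n) ℂ)
    (hind : AlgebraicIndependent ℂ
      ![homogeneousComponent f.totalDegree f, homogeneousComponent g.totalDegree g])
    (G : MvPolynomial (Fin 2) ℂ) :
    degreeOf 1 G * g.totalDegree ≤ (aeval ![f, g] G).totalDegree := by
  classical
  by_cases hG : G = 0
  · simp [hG]
  set d := f.totalDegree
  set e := g.totalDegree
  set fb := homogeneousComponent d f with hfb
  set gb := homogeneousComponent e g with hgb
  set w : (Fin 2 →₀ ℕ) → ℕ := fun s => s 0 * d + s 1 * e with hw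
  set m := G.support.sup w with hm
  have hsupp : G.support.Nonempty := MvPolynomial.support_nonempty.mpr hG
  -- each term degree bound
  have hdegterm : ∀ s : Fin 2 →₀ ℕ, (f ^ (s 0) * g ^ (s 1)).totalDegree ≤ w s := fun s =>
    le_trans (totalDegree_mul _ _) (add_le_add (totalDegree_pow _ _) (totalDegree_pow _ _))
  -- leading part of G
  set P : MvPolynomial (Fin 2) ℂ :=
    ∑ s ∈ G.support.filter (fun s => w s = m), monomial s (coeff s G) with hP
  have hkey : homogeneousComponent m (aeval ![f, g] G) = aeval ![fb, gb] P := by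
    conv_lhs => rw [G.as_sum]
    rw [map_sum, map_sum, hP, map_sum]
    rw [Finset.sum_filter]
    apply Finset.sum_congr rfl
    intro s hs
    rw [aeval_monomial_two]
    by_cases hws : w s = m
    · rw [if_pos hws, aeval_monomial_two, homogeneousComponent_C_mul]
      congr 1
      rw [← hws]
      show homogeneousComponent (s 0 * d + s 1 * e) _ = _
      rw [hc_mul (f ^ s 0) (g ^ s 1) (s 0 * d) (s 1 * e) (totalDegree_pow _ _)
        (totalDegree_pow _ _), hc_pow f d (s 0) le_rfl, hc_pow g e (s 1) le_rfl]
    · rw [if_neg hws]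
      have hlt : (C (coeff s G) * (f ^ (s 0) * g ^ (s 1))).totalDegree < m := by
        have h1 : (C (coeff s G) * (f ^ (s 0) * g ^ (s 1))).totalDegree ≤ w s :=
          le_trans (totalDegree_mul _ _) (by simpa [totalDegree_C] using hdegterm s)
        have h2 : w s ≤ m := Finset.le_sup hs
        omega
      exact homogeneousComponent_eq_zero _ _ hlt
  -- P is nonzero
  obtain ⟨s₀, hs₀, hs₀m⟩ := Finset.exists_mem_eq_sup G.support hsupp w
  have hPne : P ≠ 0 := by
    intro h0
    have : coeff s₀ P = coeff s₀ G := by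
      rw [hP]
      rw [coeff_sum]
      rw [Finset.sum_eq_single s₀]
      · rw [coeff_monomial, if_pos rfl]
      · intro b _ hb
        rw [coeff_monomial, if_neg hb]
      · intro hb
        exfalso
        exact hb (Finset.mem_filter.mpr ⟨hs₀, hs₀m.symm⟩)
    rw [h0, coeff_zero] at this
    exact (mem_support_iff.mp hs₀) this.symm
  -- injectivity from algebraic independence
  have hinj : Function.Injective (aeval ![fb, gb] :
      MvPolynomial (Fin 2) ℂ →ₐ[ℂ] MvPolynomial (Fin n) ℂ) := hind
  have hane : aeval ![fb, gb] P ≠ 0 := fun h => hPne (hinj (by simpa using h))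
  have hhcne : homogeneousComponent m (aeval ![f, g] G) ≠ 0 := hkey ▸ hane
  have hmle : m ≤ (aeval ![f, g] G).totalDegree := by
    by_contra hlt
    exact hhcne (homogeneousComponent_eq_zero _ _ (not_le.mp hlt))
  -- conclude
  obtain ⟨s₁, hs₁, hs₁e⟩ := Finset.exists_mem_eq_sup G.support hsupp (fun s : Fin 2 →₀ ℕ => s 1)
  have hdeg1 : degreeOf 1 G = s₁ 1 := by
    rw [degreeOf_eq_sup]; exact hs₁e
  calc degreeOf 1 G * g.totalDegree = s₁ 1 * e := by rw [hdeg1]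
    _ ≤ w s₁ := Nat.le_add_left _ _
    _ ≤ m := Finset.le_sup hs₁
    _ ≤ _ := hmle
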